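/- Let 0 < p < 1, q = 0 (reverse Z channel), 0 < θ < 1 and ε > 0. Define m_COMP,revZ = (1/(1−θ))·min over d ∈ (0,∞) of 1/(−d·log(1−e^{−d}(1−p))) · k·log(n/k). If m ≥ (1+ε)·m_COMP,revZ and the design and algorithm use the minimizing d (with threshold α = 1/Δ), then noisy COMP recovers σ with high probability. -/

import Mathlib

open MeasureTheory Real Filter Set
open scoped ENNReal

noncomputable section

/-- KL divergence between Bernoulli(r) and Bernoulli(s) (natural log, boundary by continuity). -/
def klBer (r s : ℝ) : ℝ := r * Real.log (r / s) + (1 - r) * Real.log ((1 - r) / (1 - s))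

instance finsetFinMeasurableSpace (m : ℕ) : MeasurableSpace (Finset (Fin m)) := ⊤

/-- Uniform probability measure on a finset. -/
def uniformFinset {α : Type*} [MeasurableSpace α] (s : Finset α) : Measure α :=
  (s.card : ℝ≥0∞)⁻¹ • ∑ x ∈ s, Measure.dirac x

/-- Bernoulli measure on `Bool` giving probability `p` to `true`. -/
def bern (p : ℝ) : Measure Bool :=
  ENNReal.ofReal p • Measure.dirac true + ENNReal.ofReal (1 - p) • Measure.dirac false

/-- Infection-status vectors of Hamming weight `k`. -/
def sigmaSet (n k : ℕ) : Finset (Fin n → Bool) :=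
  Finset.univ.filter fun σ => (Finset.univ.filter fun i => σ i = true).card = k

/-- Constant-column designs: each individual joins exactly `Δ` of the `m` tests. -/
def designSet (n m Δ : ℕ) : Finset (Fin n → Finset (Fin m)) :=
  Finset.univ.filter fun g => ∀ i, (g i).card = Δ

/-- Sample space: (infection status, design, negative-test flips `U ~ Bern(p)`,
positive-test flips `V ~ Bern(q)`). -/
abbrev GTSpace (n m : ℕ) :=
  (Fin n → Bool) × (Fin n → Finset (Fin m)) × (Fin m → Bool) × (Fin m → Bool)

/-- Joint law of the group-testing experiment with the constant-column design and p-q noise. -/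
def gtMeasure (n m Δ k : ℕ) (p q : ℝ) : Measure (GTSpace n m) :=
  (uniformFinset (sigmaSet n k)).prod ((uniformFinset (designSet n m Δ)).prod
    ((Measure.pi fun _ : Fin m => bern p).prod (Measure.pi fun _ : Fin m => bern q)))

/-- The displayed outcome of test `a`: a truly positive test (one containing an infected
individual) is flipped to negative when `V a` holds; a truly negative test is flipped to
positive when `U a` holds. -/
def displayed {n m : ℕ} (σ : Fin n → Bool) (g : Fin n → Finset (Fin m))
    (U V : Fin m → Bool) (a : Fin m) : Bool :=
  if ∃ i, σ i = true ∧ a ∈ g i then !(V a) else U a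

/-- Number of displayed-negative tests containing individual `i`. -/
def negCount {n m : ℕ} (g : Fin n → Finset (Fin m)) (disp : Fin m → Bool) (i : Fin n) : ℕ :=
  ((g i).filter fun a => disp a = false).card

/-- Noisy COMP with threshold `α`: an individual is declared healthy iff it appears in at
least `α·Δ` displayed negative tests. -/
def compOutput {n m : ℕ} (α : ℝ) (Δ : ℕ) (g : Fin n → Finset (Fin m))
    (disp : Fin m → Bool) : Fin n → Bool :=
  fun i => !(decide (α * Δ ≤ (negCount g disp i : ℝ)))

/-- Number of displayed-positive tests in which `i` is the only individual not declared
healthy in the first (COMP) step of DD. -/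
def posCount {n m : ℕ} (α : ℝ) (Δ : ℕ) (g : Fin n → Finset (Fin m))
    (disp : Fin m → Bool) (i : Fin n) : ℕ :=
  ((g i).filter fun a => disp a = true ∧
    ∀ j : Fin n, j ≠ i → a ∈ g j → α * Δ ≤ (negCount g disp j : ℝ)).card

/-- Noisy DD with thresholds `α, β`. -/
def ddOutput {n m : ℕ} (α β : ℝ) (Δ : ℕ) (g : Fin n → Finset (Fin m))
    (disp : Fin m → Bool) : Fin n → Bool :=
  fun i => decide (¬ (α * Δ ≤ (negCount g disp i : ℝ)) ∧
    β * Δ ≤ (posCount α Δ g disp i : ℝ))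

/-- The event that noisy COMP recovers the infection status exactly. -/
def compRecovers {n m : ℕ} (α : ℝ) (Δ : ℕ) : Set (GTSpace n m) :=
  {ω | compOutput α Δ ω.2.1 (displayed ω.1 ω.2.1 ω.2.2.1 ω.2.2.2) = ω.1}

/-- The event that noisy DD recovers the infection status exactly. -/
def ddRecovers {n m : ℕ} (α β : ℝ) (Δ : ℕ) : Set (GTSpace n m) :=
  {ω | ddOutput α β Δ ω.2.1 (displayed ω.1 ω.2.1 ω.2.2.1 ω.2.2.2) = ω.1}

end


section AUX
open Finset
namespace GT9
variable {m : ℕ}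

lemma card_supersets (R S : Finset (Fin m)) (Δ : ℕ) (hΔ : 1 ≤ Δ)
    (hSR : S ⊆ R) (hS : S.card = Δ - 1) :
    ((R.powersetCard Δ).filter (fun T => S ⊆ T)).card = R.card + 1 - Δ := by
  have himg : (R.powersetCard Δ).filter (fun T => S ⊆ T) = (R \ S).image (fun x => insert x S) := by
    ext T
    simp only [Finset.mem_filter, Finset.mem_powersetCard, Finset.mem_image, Finset.mem_sdiff]
    constructor
    · rintro ⟨⟨hTR, hTc⟩, hST⟩
      have hc1 : (T \ S).card = 1 := by
        rw [card_sdiff_of_subset hST, hTc, hS]; omega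
      obtain ⟨x, hx⟩ := card_eq_one.1 hc1
      have hxT : x ∈ T \ S := hx ▸ mem_singleton_self x
      refine ⟨x, ⟨hTR (mem_sdiff.1 hxT).1, (mem_sdiff.1 hxT).2⟩, ?_⟩
      apply Finset.Subset.antisymm
      · intro y hy
        rcases mem_insert.1 hy with h | h
        · exact h ▸ (mem_sdiff.1 hxT).1
        · exact hST h
      · intro y hy
        by_cases hyS : y ∈ S
        · exact mem_insert_of_mem hyS
        · have : y ∈ T \ S := mem_sdiff.2 ⟨hy, hyS⟩
          rw [hx, Finset.mem_singleton] at this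
          rw [this]
          exact mem_insert_self x S
    · rintro ⟨x, ⟨hxR, hxS⟩, rfl⟩
      refine ⟨⟨insert_subset hxR hSR, ?_⟩, subset_insert _ _⟩
      rw [card_insert_of_notMem hxS, hS]; omega
  rw [himg, card_image_of_injOn, card_sdiff_of_subset hSR, hS]
  · omega
  · intro x hx y hy hxy
    have hxS := (mem_sdiff.1 hx).2
    have hyS := (mem_sdiff.1 hy).2
    have hxy' : insert x S = insert y S := hxy
    have : x ∈ insert y S := hxy' ▸ mem_insert_self x S
    rcases mem_insert.1 this with h | h
    · exact h
    · exact absurd h hxS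

lemma mono_core (R : Finset (Fin m)) (Δ : ℕ) (hΔ : 1 ≤ Δ)
    (F : Finset (Fin m) → ℝ) (hF : ∀ S T, S ⊆ T → F S ≤ F T) :
    ((R.card + 1 - Δ : ℕ) : ℝ) * ∑ S ∈ R.powersetCard (Δ - 1), F S
      ≤ (Δ : ℝ) * ∑ T ∈ R.powersetCard Δ, F T := by
  have key : ∑ T ∈ R.powersetCard Δ, ∑ S ∈ T.powersetCard (Δ - 1), F S
      = ∑ S ∈ R.powersetCard (Δ - 1), ∑ T ∈ (R.powersetCard Δ).filter (fun T => S ⊆ T), F S := by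
    apply Finset.sum_comm'
    intro T S
    simp only [Finset.mem_powersetCard, Finset.mem_filter]
    constructor
    · rintro ⟨⟨hTR, hTc⟩, hST, hSc⟩
      exact ⟨⟨⟨hTR, hTc⟩, hST⟩, hST.trans hTR, hSc⟩
    · rintro ⟨⟨⟨hTR, hTc⟩, hST⟩, hSR, hSc⟩
      exact ⟨⟨hTR, hTc⟩, hST, hSc⟩
  have lhs_eq : ∑ S ∈ R.powersetCard (Δ - 1), ∑ T ∈ (R.powersetCard Δ).filter (fun T => S ⊆ T), F S
      = ((R.card + 1 - Δ : ℕ) : ℝ) * ∑ S ∈ R.powersetCard (Δ - 1), F S := by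
    rw [Finset.mul_sum]
    apply Finset.sum_congr rfl
    intro S hS
    rw [Finset.sum_const,
      card_supersets R S Δ hΔ (mem_powersetCard.1 hS).1 (mem_powersetCard.1 hS).2,
      nsmul_eq_mul]
  have step : ∑ T ∈ R.powersetCard Δ, ∑ S ∈ T.powersetCard (Δ - 1), F S
      ≤ ∑ T ∈ R.powersetCard Δ, ∑ S ∈ T.powersetCard (Δ - 1), F T := by
    apply Finset.sum_le_sum
    intro T hT
    apply Finset.sum_le_sum
    intro S hS
    exact hF S T (mem_powersetCard.1 hS).1
  have rhs_eq : ∑ T ∈ R.powersetCard Δ, ∑ S ∈ T.powersetCard (Δ - 1), F T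
      = (Δ : ℝ) * ∑ T ∈ R.powersetCard Δ, F T := by
    rw [Finset.mul_sum]
    apply Finset.sum_congr rfl
    intro T hT
    rw [Finset.sum_const, card_powersetCard, (mem_powersetCard.1 hT).2, nsmul_eq_mul]
    congr 1
    have : Δ - (Δ - 1) = 1 := by omega
    rw [← Nat.choose_symm (Nat.sub_le Δ 1), this, Nat.choose_one_right]
  calc ((R.card + 1 - Δ : ℕ) : ℝ) * ∑ S ∈ R.powersetCard (Δ - 1), F S
      = ∑ T ∈ R.powersetCard Δ, ∑ S ∈ T.powersetCard (Δ - 1), F S := by rw [key, lhs_eq]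
    _ ≤ ∑ T ∈ R.powersetCard Δ, ∑ S ∈ T.powersetCard (Δ - 1), F T := step
    _ = (Δ : ℝ) * ∑ T ∈ R.powersetCard Δ, F T := rhs_eq

end GT9

namespace GT9b
open GT9
variable {m : ℕ}

/-- The sum of a b-insensitive nonneg monotone function over Δ-subsets avoiding b
is at least ρ = (m-Δ)/m times the full sum. -/
lemma avoid_ge (Δ : ℕ) (hΔm : Δ ≤ m) (b : Fin m)
    (F : Finset (Fin m) → ℝ) (hF0 : ∀ B, 0 ≤ F B)
    (hFmono : ∀ S T, S ⊆ T → F S ≤ F T)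
    (hFb : ∀ B, F (insert b B) = F B) :
    (((m : ℝ) - Δ)/m) * ∑ B ∈ (Finset.univ : Finset (Fin m)).powersetCard Δ, F B
      ≤ ∑ B ∈ ((Finset.univ : Finset (Fin m)).powersetCard Δ).filter (fun B => b ∉ B), F B := by
  classical
  have hm : 0 < m := Fin.pos b
  set P := (Finset.univ : Finset (Fin m)).powersetCard Δ with hP
  set R := (Finset.univ : Finset (Fin m)).erase b with hR
  have hRcard : R.card = m - 1 := by
    rw [hR, Finset.card_erase_of_mem (Finset.mem_univ b), Finset.card_univ, Fintype.card_fin]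
  set S0 := ∑ B ∈ P.filter (fun B => b ∉ B), F B with hS0
  set S1 := ∑ B ∈ P.filter (fun B => b ∈ B), F B with hS1
  have hsplit : ∑ B ∈ P, F B = S1 + S0 := by
    rw [hS1, hS0, ← Finset.sum_filter_add_sum_filter_not P (fun B => b ∈ B)]
  have hS0nn : 0 ≤ S0 := Finset.sum_nonneg fun B _ => hF0 B
  have hS1nn : 0 ≤ S1 := Finset.sum_nonneg fun B _ => hF0 B
  rcases Nat.eq_zero_or_pos Δ with hΔ0 | hΔpos
  · subst hΔ0
    have : P.filter (fun B => b ∉ B) = P := by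
      apply Finset.filter_true_of_mem
      intro B hB
      have : B.card = 0 := (Finset.mem_powersetCard.1 hB).2
      rw [Finset.card_eq_zero] at this
      simp [this]
    rw [hS0, this]
    have : ((m : ℝ) - 0)/m = 1 := by
      field_simp
      simp
    rw [Nat.cast_zero, this, one_mul]
  · -- Δ ≥ 1
    have hfilter0 : P.filter (fun B => b ∉ B) = R.powersetCard Δ := by
      ext B
      simp only [hP, hR, Finset.mem_filter, Finset.mem_powersetCard, Finset.subset_erase]
      tauto
    have hS0' : S0 = ∑ T ∈ R.powersetCard Δ, F T := by rw [hS0, hfilter0]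
    have hS1' : S1 = ∑ S ∈ R.powersetCard (Δ - 1), F S := by
      rw [hS1]
      apply Finset.sum_nbij' (fun B => B.erase b) (fun S => insert b S)
      · intro B hB
        simp only [Finset.mem_filter, hP, Finset.mem_powersetCard] at hB
        simp only [Finset.mem_powersetCard, hR, Finset.subset_erase]
        exact ⟨⟨Finset.subset_univ _, Finset.notMem_erase b B⟩,
          by rw [Finset.card_erase_of_mem hB.2, hB.1.2]⟩
      · intro S hS
        simp only [Finset.mem_powersetCard, hR, Finset.subset_erase] at hS
        simp only [Finset.mem_filter, hP, Finset.mem_powersetCard]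
        refine ⟨⟨Finset.subset_univ _, ?_⟩, Finset.mem_insert_self b S⟩
        rw [Finset.card_insert_of_notMem hS.1.2, hS.2]
        omega
      · intro B hB
        simp only [Finset.mem_filter] at hB
        exact Finset.insert_erase hB.2
      · intro S hS
        simp only [Finset.mem_powersetCard, hR, Finset.subset_erase] at hS
        exact Finset.erase_insert hS.1.2
      · intro B hB
        have := hFb (B.erase b)
        rw [Finset.insert_erase (Finset.mem_filter.1 hB).2] at this
        exact this
    have hmono := mono_core R Δ hΔpos F hFmono
    rw [← hS0', ← hS1', hRcard] at hmono
    have hcast : ((m - 1 + 1 - Δ : ℕ) : ℝ) = (m : ℝ) - Δ := by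
      have : m - 1 + 1 - Δ = m - Δ := by omega
      rw [this, Nat.cast_sub hΔm]
    rw [hcast] at hmono
    -- hmono : (m - Δ) * S1 ≤ Δ * S0
    rw [hsplit, div_mul_eq_mul_div, div_le_iff₀ (by positivity : (0:ℝ) < m)]
    have hΔm' : (Δ : ℝ) ≤ m := by exact_mod_cast hΔm
    nlinarith [hmono, hS0nn, hS1nn]

/-- Single-subset NA bound. -/
lemma single (Δ : ℕ) (hΔm : Δ ≤ m) (c : Fin m → ℝ)
    (hc0 : ∀ a, 0 ≤ c a) (hc1 : ∀ a, c a ≤ 1) (A : Finset (Fin m)) :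
    ∑ B ∈ (Finset.univ : Finset (Fin m)).powersetCard Δ,
        ∏ a ∈ A, (1 - c a * (if a ∈ B then 0 else 1))
      ≤ (m.choose Δ : ℝ) * ∏ a ∈ A, (1 - c a * (((m : ℝ) - Δ)/m)) := by
  classical
  set ρ : ℝ := ((m : ℝ) - Δ)/m with hρ
  have hρ0 : 0 ≤ ρ := by
    apply div_nonneg _ (Nat.cast_nonneg m)
    have : (Δ : ℝ) ≤ m := by exact_mod_cast hΔm
    linarith
  have hρ1 : ρ ≤ 1 := by
    apply div_le_one_of_le₀ _ (Nat.cast_nonneg m)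
    have : (0:ℝ) ≤ Δ := Nat.cast_nonneg Δ
    linarith
  induction A using Finset.induction_on with
  | empty =>
    simp only [Finset.prod_empty, mul_one]
    rw [Finset.sum_const, Finset.card_powersetCard, Finset.card_univ, Fintype.card_fin,
      nsmul_eq_mul, mul_one]
  | insert _ _ hbA' =>
    rename_i b A' ih
    set P := (Finset.univ : Finset (Fin m)).powersetCard Δ with hP
    set F : Finset (Fin m) → ℝ := fun B => ∏ a ∈ A', (1 - c a * (if a ∈ B then 0 else 1)) with hF
    have hfac0 : ∀ (a : Fin m) (B : Finset (Fin m)), 0 ≤ 1 - c a * (if a ∈ B then 0 else 1) := by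
      intro a B
      by_cases h : a ∈ B
      · simp [h]
      · simp [h]
        exact hc1 a
    have hfac1 : ∀ (a : Fin m) (B : Finset (Fin m)), 1 - c a * (if a ∈ B then 0 else 1) ≤ 1 := by
      intro a B
      by_cases h : a ∈ B
      · simp [h]
      · simp [h]
        exact hc0 a
    have hF0 : ∀ B, 0 ≤ F B := fun B => Finset.prod_nonneg fun a _ => hfac0 a B
    have hFmono : ∀ S T, S ⊆ T → F S ≤ F T := by
      intro S T hST
      apply Finset.prod_le_prod (fun a _ => hfac0 a S)
      intro a _
      by_cases haS : a ∈ S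
      · simp [haS, hST haS]
      · by_cases haT : a ∈ T
        · simp [haS, haT]
          exact hc0 a
        · simp [haS, haT]
    have hFb : ∀ B, F (insert b B) = F B := by
      intro B
      apply Finset.prod_congr rfl
      intro a haA'
      have : a ≠ b := fun h => hbA' (h ▸ haA')
      simp [Finset.mem_insert, this]
    have hsum : ∑ B ∈ P, ∏ a ∈ insert b A', (1 - c a * (if a ∈ B then 0 else 1))
        = ∑ B ∈ P, F B - c b * ∑ B ∈ P.filter (fun B => b ∉ B), F B := by
      have e1 : ∀ B ∈ P, ∏ a ∈ insert b A', (1 - c a * (if a ∈ B then 0 else 1))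
          = F B - (if b ∉ B then c b * F B else 0) := by
        intro B _
        rw [Finset.prod_insert hbA']
        by_cases hbB : b ∈ B
        · simp [hF, hbB]
        · simp [hF, hbB]
          ring
      rw [Finset.sum_congr rfl e1, Finset.sum_sub_distrib, ← Finset.sum_filter, Finset.mul_sum]
    rw [hsum, Finset.prod_insert hbA']
    have havoid := avoid_ge Δ hΔm b F hF0 hFmono hFb
    have h1 : ∑ B ∈ P, F B - c b * ∑ B ∈ P.filter (fun B => b ∉ B), F B
        ≤ (1 - c b * ρ) * ∑ B ∈ P, F B := by
      nlinarith [mul_le_mul_of_nonneg_left havoid (hc0 b)]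
    have h2 : (1 - c b * ρ) * ∑ B ∈ P, F B ≤ (1 - c b * ρ) * ((m.choose Δ : ℝ) * ∏ a ∈ A', (1 - c a * ρ)) := by
      apply mul_le_mul_of_nonneg_left ih
      nlinarith [hc0 b, hc1 b, hρ0, hρ1]
    calc _ ≤ (1 - c b * ρ) * ∑ B ∈ P, F B := h1
      _ ≤ _ := h2
      _ = (m.choose Δ : ℝ) * ((1 - c b * ρ) * ∏ a ∈ A', (1 - c a * ρ)) := by ring

end GT9b

namespace GT9c
open GT9b Finset

lemma avg {n : ℕ} {β : Type*} [DecidableEq β] (s : Finset β) (j : Fin n)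
    (F : (Fin n → β) → ℝ) :
    ∑ g ∈ Fintype.piFinset (fun _ : Fin n => s), ∑ B ∈ s, F (Function.update g j B)
      = (s.card : ℝ) * ∑ g ∈ Fintype.piFinset (fun _ : Fin n => s), F g := by
  classical
  set G := Fintype.piFinset (fun _ : Fin n => s) with hG
  have h1 : ∑ g ∈ G, ∑ B ∈ s, F (Function.update g j B)
      = ∑ x ∈ G ×ˢ s, F (Function.update x.1 j x.2) := by
    rw [Finset.sum_product]
  have h2 : ∑ x ∈ G ×ˢ s, F (Function.update x.1 j x.2) = ∑ x ∈ G ×ˢ s, F x.1 := by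
    apply Finset.sum_nbij' (fun x => (Function.update x.1 j x.2, x.1 j))
      (fun x => (Function.update x.1 j x.2, x.1 j))
    · rintro ⟨g, B⟩ hx
      simp only [Finset.mem_product, hG, Fintype.mem_piFinset] at hx ⊢
      refine ⟨fun a => ?_, hx.1 j⟩
      by_cases h : a = j
      · subst h; rw [Function.update_self]; exact hx.2
      · rw [Function.update_of_ne h]; exact hx.1 a
    · rintro ⟨g, B⟩ hx
      simp only [Finset.mem_product, hG, Fintype.mem_piFinset] at hx ⊢
      refine ⟨fun a => ?_, hx.1 j⟩
      by_cases h : a = j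
      · subst h; rw [Function.update_self]; exact hx.2
      · rw [Function.update_of_ne h]; exact hx.1 a
    · rintro ⟨g, B⟩ _
      simp [Function.update_idem, Function.update_self, Function.update_eq_self]
    · rintro ⟨g, B⟩ _
      simp [Function.update_idem, Function.update_self, Function.update_eq_self]
    · rintro ⟨g, B⟩ _
      rfl
  have h3 : ∑ x ∈ G ×ˢ s, F x.1 = (s.card : ℝ) * ∑ g ∈ G, F g := by
    rw [Finset.sum_product]
    simp only [Finset.sum_const, nsmul_eq_mul]
    rw [Finset.mul_sum]
  rw [h1, h2, h3]

lemma lemK (n m Δ : ℕ) (hΔm : Δ ≤ m) (K : Finset (Fin n)) :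
    ∀ (c : Fin m → ℝ), (∀ a, 0 ≤ c a) → (∀ a, c a ≤ 1) → ∀ (A : Finset (Fin m)),
    ∑ g ∈ Fintype.piFinset (fun _ : Fin n => (Finset.univ : Finset (Fin m)).powersetCard Δ),
        ∏ a ∈ A, (1 - c a * ∏ j ∈ K, (if a ∈ g j then (0:ℝ) else 1))
      ≤ ((m.choose Δ : ℝ))^n * ∏ a ∈ A, (1 - c a * (((m : ℝ) - Δ)/m) ^ K.card) := by
  classical
  set ρ : ℝ := ((m : ℝ) - Δ)/m with hρdef
  have hρ0 : 0 ≤ ρ := by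
    apply div_nonneg _ (Nat.cast_nonneg m)
    have : (Δ : ℝ) ≤ m := by exact_mod_cast hΔm
    linarith
  have hρ1 : ρ ≤ 1 := by
    apply div_le_one_of_le₀ _ (Nat.cast_nonneg m)
    have : (0:ℝ) ≤ Δ := Nat.cast_nonneg Δ
    linarith
  set P := (Finset.univ : Finset (Fin m)).powersetCard Δ with hPdef
  have hPcard : P.card = m.choose Δ := by
    rw [hPdef, Finset.card_powersetCard, Finset.card_univ, Fintype.card_fin]
  have hGcard : (Fintype.piFinset (fun _ : Fin n => P)).card = (m.choose Δ)^n := by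
    rw [Fintype.card_piFinset]
    simp [hPcard]
  have hCpos : 0 < (m.choose Δ : ℝ) := by
    exact_mod_cast Nat.choose_pos hΔm
  induction K using Finset.induction_on with
  | empty =>
    intro c hc0 hc1 A
    simp only [Finset.prod_empty, Finset.card_empty, pow_zero, mul_one]
    rw [Finset.sum_const, hGcard, nsmul_eq_mul, Nat.cast_pow]
  | insert _ _ hjK' =>
    rename_i j K' ih
    intro c hc0 hc1 A
    rw [← mul_le_mul_iff_right₀ hCpos]
    have step1 : (m.choose Δ : ℝ) * ∑ g ∈ Fintype.piFinset (fun _ : Fin n => P),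
          ∏ a ∈ A, (1 - c a * ∏ j' ∈ insert j K', (if a ∈ g j' then (0:ℝ) else 1))
        = ∑ g ∈ Fintype.piFinset (fun _ : Fin n => P), ∑ B ∈ P,
          ∏ a ∈ A, (1 - (c a * ∏ j' ∈ K', (if a ∈ g j' then (0:ℝ) else 1)) * (if a ∈ B then (0:ℝ) else 1)) := by
      rw [← hPcard, ← avg P j]
      apply Finset.sum_congr rfl
      intro g hg
      apply Finset.sum_congr rfl
      intro B hB
      apply Finset.prod_congr rfl
      intro a ha
      rw [Finset.prod_insert hjK', Function.update_self]
      have : ∏ j' ∈ K', (if a ∈ Function.update g j B j' then (0:ℝ) else 1)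
          = ∏ j' ∈ K', (if a ∈ g j' then (0:ℝ) else 1) := by
        apply Finset.prod_congr rfl
        intro j' hj'
        have : j' ≠ j := fun h => hjK' (h ▸ hj')
        rw [Function.update_of_ne this]
      rw [this]
      ring
    rw [step1]
    have step2 : ∀ g ∈ Fintype.piFinset (fun _ : Fin n => P),
        ∑ B ∈ P, ∏ a ∈ A, (1 - (c a * ∏ j' ∈ K', (if a ∈ g j' then (0:ℝ) else 1)) * (if a ∈ B then (0:ℝ) else 1))
          ≤ (m.choose Δ : ℝ) * ∏ a ∈ A, (1 - (c a * ρ) * ∏ j' ∈ K', (if a ∈ g j' then (0:ℝ) else 1)) := by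
      intro g hg
      have hprod01 : ∀ a, 0 ≤ ∏ j' ∈ K', (if a ∈ g j' then (0:ℝ) else 1) ∧
          ∏ j' ∈ K', (if a ∈ g j' then (0:ℝ) else 1) ≤ 1 := by
        intro a
        constructor
        · apply Finset.prod_nonneg; intro j' _; split <;> norm_num
        · apply Finset.prod_le_one
          · intro j' _; split <;> norm_num
          · intro j' _; split <;> norm_num
      have := GT9b.single Δ hΔm (fun a => c a * ∏ j' ∈ K', (if a ∈ g j' then (0:ℝ) else 1))
        (fun a => mul_nonneg (hc0 a) (hprod01 a).1)
        (fun a => mul_le_one₀ (hc1 a) (hprod01 a).1 (hprod01 a).2) A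
      refine this.trans (le_of_eq ?_)
      congr 1
      apply Finset.prod_congr rfl
      intro a _
      rw [← hρdef]
      ring
    calc ∑ g ∈ Fintype.piFinset (fun _ : Fin n => P), ∑ B ∈ P,
          ∏ a ∈ A, (1 - (c a * ∏ j' ∈ K', (if a ∈ g j' then (0:ℝ) else 1)) * (if a ∈ B then (0:ℝ) else 1))
        ≤ ∑ g ∈ Fintype.piFinset (fun _ : Fin n => P),
          (m.choose Δ : ℝ) * ∏ a ∈ A, (1 - (c a * ρ) * ∏ j' ∈ K', (if a ∈ g j' then (0:ℝ) else 1)) :=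
        Finset.sum_le_sum step2
      _ = (m.choose Δ : ℝ) * ∑ g ∈ Fintype.piFinset (fun _ : Fin n => P),
          ∏ a ∈ A, (1 - (c a * ρ) * ∏ j' ∈ K', (if a ∈ g j' then (0:ℝ) else 1)) := by
        rw [Finset.mul_sum]
      _ ≤ (m.choose Δ : ℝ) * ((m.choose Δ : ℝ)^n * ∏ a ∈ A, (1 - (c a * ρ) * ρ ^ K'.card)) := by
        apply mul_le_mul_of_nonneg_left _ (le_of_lt hCpos)
        exact ih (fun a => c a * ρ) (fun a => mul_nonneg (hc0 a) hρ0)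
          (fun a => mul_le_one₀ (hc1 a) hρ0 hρ1) A
      _ = (m.choose Δ : ℝ) * ((m.choose Δ : ℝ)^n * ∏ a ∈ A, (1 - c a * ρ ^ (insert j K').card)) := by
        congr 1
        congr 1
        apply Finset.prod_congr rfl
        intro a _
        rw [Finset.card_insert_of_notMem hjK', pow_succ]
        ring

lemma main_comb (n m Δ : ℕ) (hΔm : Δ ≤ m) (p : ℝ) (hp0 : 0 ≤ p) (hp1 : p ≤ 1)
    (i : Fin n) (K : Finset (Fin n)) (hiK : i ∉ K) :
    ∑ g ∈ Fintype.piFinset (fun _ : Fin n => (Finset.univ : Finset (Fin m)).powersetCard Δ),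
        ∏ a ∈ g i, (1 - (1 - p) * ∏ j ∈ K, (if a ∈ g j then (0:ℝ) else 1))
      ≤ ((m.choose Δ : ℝ))^n * (1 - (1 - p) * (((m : ℝ) - Δ)/m) ^ K.card) ^ Δ := by
  classical
  set ρ : ℝ := ((m : ℝ) - Δ)/m with hρdef
  set P := (Finset.univ : Finset (Fin m)).powersetCard Δ with hPdef
  have hPcard : P.card = m.choose Δ := by
    rw [hPdef, Finset.card_powersetCard, Finset.card_univ, Fintype.card_fin]
  have hCpos : 0 < (m.choose Δ : ℝ) := by
    exact_mod_cast Nat.choose_pos hΔm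
  rw [← mul_le_mul_iff_right₀ hCpos]
  have step1 : (m.choose Δ : ℝ) * ∑ g ∈ Fintype.piFinset (fun _ : Fin n => P),
        ∏ a ∈ g i, (1 - (1 - p) * ∏ j ∈ K, (if a ∈ g j then (0:ℝ) else 1))
      = ∑ B ∈ P, ∑ g ∈ Fintype.piFinset (fun _ : Fin n => P),
        ∏ a ∈ B, (1 - (1 - p) * ∏ j ∈ K, (if a ∈ g j then (0:ℝ) else 1)) := by
    rw [← hPcard, ← avg P i, Finset.sum_comm]
    apply Finset.sum_congr rfl
    intro B _
    apply Finset.sum_congr rfl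
    intro g _
    rw [Function.update_self]
    apply Finset.prod_congr rfl
    intro a _
    congr 1
    congr 1
    apply Finset.prod_congr rfl
    intro j hj
    have : j ≠ i := fun h => hiK (h ▸ hj)
    rw [Function.update_of_ne this]
  rw [step1]
  calc ∑ B ∈ P, ∑ g ∈ Fintype.piFinset (fun _ : Fin n => P),
        ∏ a ∈ B, (1 - (1 - p) * ∏ j ∈ K, (if a ∈ g j then (0:ℝ) else 1))
      ≤ ∑ B ∈ P, ((m.choose Δ : ℝ))^n * ∏ a ∈ B, (1 - (1 - p) * ρ ^ K.card) := by
        apply Finset.sum_le_sum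
        intro B _
        exact lemK n m Δ hΔm K (fun _ => 1 - p)
          (fun _ => by simpa using (by linarith : (0:ℝ) ≤ 1 - p))
          (fun _ => by simpa using (by linarith : (1:ℝ) - p ≤ 1)) B
    _ = (m.choose Δ : ℝ) * (((m.choose Δ : ℝ))^n * (1 - (1 - p) * ρ ^ K.card) ^ Δ) := by
        rw [Finset.sum_congr rfl (fun B hB => ?_), Finset.sum_const, hPcard, nsmul_eq_mul]
        rw [Finset.prod_const, (Finset.mem_powersetCard.1 hB).2]

end GT9c

end AUX

section MEAS
open MeasureTheory

instance finsetMeasSingleton (m : ℕ) : MeasurableSingletonClass (Finset (Fin m)) :=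
  ⟨fun _ => trivial⟩

lemma measurableSet_all {n m : ℕ} (s : Set (GTSpace n m)) : MeasurableSet s :=
  (Set.toFinite s).measurableSet

lemma uniformFinset_apply_singleton {α : Type*} [DecidableEq α] [MeasurableSpace α] [MeasurableSingletonClass α]
    (s : Finset α) (x : α) :
    uniformFinset s {x} = (s.card : ℝ≥0∞)⁻¹ * (if x ∈ s then 1 else 0) := by
  classical
  rw [uniformFinset, Measure.smul_apply, Measure.finset_sum_apply, smul_eq_mul]
  congr 1
  by_cases hx : x ∈ s
  · rw [Finset.sum_eq_single_of_mem x hx (fun y _ hyx => by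
      rw [Measure.dirac_apply]
      simp [Set.indicator, hyx]), Measure.dirac_apply_of_mem (Set.mem_singleton x), if_pos hx]
  · rw [if_neg hx, Finset.sum_eq_zero]
    intro y hy
    have : y ≠ x := fun h => hx (h ▸ hy)
    rw [Measure.dirac_apply]
    simp [Set.indicator, this]

lemma uniformFinset_univ {α : Type*} [MeasurableSpace α] (s : Finset α) (hs : s.Nonempty) :
    uniformFinset s Set.univ = 1 := by
  rw [uniformFinset, Measure.smul_apply, Measure.finset_sum_apply, smul_eq_mul]
  have h1 : ∀ x ∈ s, Measure.dirac x (Set.univ : Set α) = 1 := fun x _ =>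
    Measure.dirac_apply_of_mem (Set.mem_univ x)
  rw [Finset.sum_congr rfl h1, Finset.sum_const, nsmul_eq_mul, mul_one]
  exact ENNReal.inv_mul_cancel (Nat.cast_ne_zero.mpr hs.card_pos.ne') (ENNReal.natCast_ne_top _)

lemma inv_mul_self_le_one (c : ℝ≥0∞) (hc : c ≠ ⊤) : c⁻¹ * c ≤ 1 := by
  rcases eq_or_ne c 0 with rfl | h
  · simp
  · rw [ENNReal.inv_mul_cancel h hc]

lemma uniformFinset_le_one {α : Type*} [MeasurableSpace α] (s : Finset α) (t : Set α) :
    uniformFinset s t ≤ 1 := by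
  rw [uniformFinset, Measure.smul_apply, Measure.finset_sum_apply, smul_eq_mul]
  calc (s.card : ℝ≥0∞)⁻¹ * ∑ x ∈ s, Measure.dirac x t
      ≤ (s.card : ℝ≥0∞)⁻¹ * ∑ x ∈ s, 1 := by
        gcongr with x hx
        calc Measure.dirac x t ≤ Measure.dirac x Set.univ := measure_mono (Set.subset_univ t)
          _ = 1 := Measure.dirac_apply_of_mem (Set.mem_univ x)
    _ = (s.card : ℝ≥0∞)⁻¹ * s.card := by simp
    _ ≤ 1 := inv_mul_self_le_one _ (ENNReal.natCast_ne_top _)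

instance uniformFinset_finite {α : Type*} [MeasurableSpace α] (s : Finset α) :
    IsFiniteMeasure (uniformFinset s) :=
  ⟨lt_of_le_of_lt (uniformFinset_le_one s _) ENNReal.one_lt_top⟩

lemma sum_uniform_singleton_le_one {α : Type*} [Fintype α] [DecidableEq α] [MeasurableSpace α]
    [MeasurableSingletonClass α] (s : Finset α) :
    ∑ x : α, uniformFinset s {x} ≤ 1 := by
  classical
  calc ∑ x : α, uniformFinset s {x}
      = ∑ x : α, (s.card : ℝ≥0∞)⁻¹ * (if x ∈ s then 1 else 0) := by
        exact Finset.sum_congr rfl fun x _ => uniformFinset_apply_singleton s x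
    _ = (s.card : ℝ≥0∞)⁻¹ * ∑ x : α, (if x ∈ s then 1 else 0) := by rw [Finset.mul_sum]
    _ = (s.card : ℝ≥0∞)⁻¹ * s.card := by
        rw [Finset.sum_ite_mem, Finset.univ_inter, Finset.sum_const, nsmul_eq_mul, mul_one]
    _ ≤ 1 := inv_mul_self_le_one _ (ENNReal.natCast_ne_top _)

lemma bern_apply_true (p : ℝ) : bern p {true} = ENNReal.ofReal p := by
  rw [bern, Measure.add_apply, Measure.smul_apply, Measure.smul_apply, smul_eq_mul, smul_eq_mul,
    Measure.dirac_apply_of_mem (Set.mem_singleton true), Measure.dirac_apply]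
  simp [Set.indicator]

lemma bern_univ (p : ℝ) (hp0 : 0 ≤ p) (hp1 : p ≤ 1) : bern p Set.univ = 1 := by
  rw [bern, Measure.add_apply, Measure.smul_apply, Measure.smul_apply, smul_eq_mul, smul_eq_mul,
    Measure.dirac_apply_of_mem (Set.mem_univ true), Measure.dirac_apply_of_mem (Set.mem_univ false),
    mul_one, mul_one, ← ENNReal.ofReal_add hp0 (by linarith)]
  norm_num

instance bern_finite (p : ℝ) : IsFiniteMeasure (bern p) := by
  constructor
  rw [bern, Measure.add_apply, Measure.smul_apply, Measure.smul_apply, smul_eq_mul, smul_eq_mul,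
    Measure.dirac_apply_of_mem (Set.mem_univ true), Measure.dirac_apply_of_mem (Set.mem_univ false),
    mul_one, mul_one]
  exact ENNReal.add_lt_top.mpr ⟨ENNReal.ofReal_lt_top, ENNReal.ofReal_lt_top⟩

lemma pi_bern_univ (m : ℕ) (p : ℝ) (hp0 : 0 ≤ p) (hp1 : p ≤ 1) :
    (Measure.pi fun _ : Fin m => bern p) Set.univ = 1 := by
  rw [Measure.pi_univ]
  simp only [bern_univ p hp0 hp1, Finset.prod_const_one]

lemma pi_bern_cyl (m : ℕ) (p : ℝ) (hp0 : 0 ≤ p) (hp1 : p ≤ 1) (P : Fin m → Prop)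
    [DecidablePred P] :
    (Measure.pi fun _ : Fin m => bern p) {U : Fin m → Bool | ∀ a, P a → U a = true}
      = ENNReal.ofReal (∏ a : Fin m, if P a then p else 1) := by
  have hset : {U : Fin m → Bool | ∀ a, P a → U a = true}
      = Set.univ.pi (fun a => if P a then {true} else (Set.univ : Set Bool)) := by
    ext U
    simp only [Set.mem_setOf_eq, Set.mem_pi, Set.mem_univ, forall_true_left]
    constructor
    · intro h a
      by_cases hPa : P a
      · simp [hPa, h a hPa]
      · simp [hPa]
    · intro h a hPa
      have := h a
      simp [hPa] at this
      exact this
  rw [hset, Measure.pi_pi, ENNReal.ofReal_prod_of_nonneg (fun a _ => by positivity)]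
  apply Finset.prod_congr rfl
  intro a _
  by_cases hPa : P a
  · rw [if_pos hPa, if_pos hPa, bern_apply_true]
  · rw [if_neg hPa, if_neg hPa, bern_univ p hp0 hp1, ENNReal.ofReal_one]

lemma pi_bern0_compl_false (m : ℕ) :
    (Measure.pi fun _ : Fin m => bern 0) ({fun _ => false} : Set (Fin m → Bool))ᶜ = 0 := by
  have h1 : ({fun _ => false} : Set (Fin m → Bool))
      = {U : Fin m → Bool | ∀ a, True → U a = false} := by
    ext U
    simp [funext_iff]
  have h2 : (Measure.pi fun _ : Fin m => bern 0) ({fun _ => false} : Set (Fin m → Bool)) = 1 := by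
    have hset : ({fun _ => false} : Set (Fin m → Bool))
        = Set.univ.pi (fun _ => ({false} : Set Bool)) := by
      ext U
      simp [funext_iff]
    rw [hset, Measure.pi_pi]
    have : bern 0 ({false} : Set Bool) = 1 := by
      rw [bern, Measure.add_apply, Measure.smul_apply, Measure.smul_apply, smul_eq_mul, smul_eq_mul,
        Measure.dirac_apply_of_mem (Set.mem_singleton false), Measure.dirac_apply]
      simp [Set.indicator]
    simp [this]
  rw [measure_compl (measurableSet_singleton _) (by
    exact ne_of_lt (lt_of_le_of_lt (measure_mono (Set.subset_univ _))
      (by rw [pi_bern_univ m 0 le_rfl zero_le_one]; exact ENNReal.one_lt_top))), h2,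
    pi_bern_univ m 0 le_rfl zero_le_one, tsub_self]

end MEAS


section BRIDGE
open MeasureTheory

lemma designSet_eq_piFinset (n m Δ : ℕ) :
    designSet n m Δ
      = Fintype.piFinset (fun _ : Fin n => (Finset.univ : Finset (Fin m)).powersetCard Δ) := by
  ext g
  simp [designSet, Fintype.mem_piFinset, Finset.mem_powersetCard_univ]

lemma designSet_card (n m Δ : ℕ) : (designSet n m Δ).card = (m.choose Δ)^n := by
  rw [designSet_eq_piFinset, Fintype.card_piFinset]
  simp [Finset.card_powersetCard]

lemma designSet_nonempty (n m Δ : ℕ) (h : Δ ≤ m) : (designSet n m Δ).Nonempty := by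
  obtain ⟨B, -, hB⟩ := Finset.exists_subset_card_eq
    (show Δ ≤ (Finset.univ : Finset (Fin m)).card by simpa using h)
  exact ⟨fun _ => B, by simp [designSet, hB]⟩

lemma sigmaSet_nonempty (n k : ℕ) (h : k ≤ n) : (sigmaSet n k).Nonempty := by
  classical
  obtain ⟨S, -, hS⟩ := Finset.exists_subset_card_eq
    (show k ≤ (Finset.univ : Finset (Fin n)).card by simpa using h)
  refine ⟨fun i => decide (i ∈ S), ?_⟩
  simp only [sigmaSet, Finset.mem_filter, Finset.mem_univ, true_and]
  rw [← hS]
  congr 1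
  ext i
  simp

lemma gtMeasure_univ (n m Δ k : ℕ) (p q : ℝ) (hkn : k ≤ n) (hΔm : Δ ≤ m)
    (hp0 : 0 ≤ p) (hp1 : p ≤ 1) (hq0 : 0 ≤ q) (hq1 : q ≤ 1) :
    gtMeasure n m Δ k p q Set.univ = 1 := by
  rw [gtMeasure,
    show (Set.univ : Set (GTSpace n m)) = Set.univ ×ˢ (Set.univ ×ˢ (Set.univ ×ˢ Set.univ)) by
      simp [Set.univ_prod_univ],
    Measure.prod_prod, Measure.prod_prod, Measure.prod_prod,
    uniformFinset_univ _ (sigmaSet_nonempty n k hkn),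
    uniformFinset_univ _ (designSet_nonempty n m Δ hΔm),
    pi_bern_univ m p hp0 hp1, pi_bern_univ m q hq0 hq1]
  norm_num

lemma Bset_bound (n m Δ k : ℕ) (p : ℝ) (hp0 : 0 ≤ p) (hp1 : p ≤ 1) (hΔm : Δ ≤ m) (i : Fin n) :
    gtMeasure n m Δ k p 0
      {ω : GTSpace n m | ω.1 i = false ∧
        ∀ a ∈ ω.2.1 i, (¬ ∃ j, ω.1 j = true ∧ a ∈ ω.2.1 j) → ω.2.2.1 a = true}
      ≤ ENNReal.ofReal ((1 - (1 - p) * (((m:ℝ) - Δ)/m)^k)^Δ) := by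
  classical
  set ρ : ℝ := ((m:ℝ) - Δ)/m with hρ
  have hΔm' : (Δ : ℝ) ≤ m := by exact_mod_cast hΔm
  have hρ0 : 0 ≤ ρ := div_nonneg (by linarith) (Nat.cast_nonneg m)
  have hρ1 : ρ ≤ 1 := div_le_one_of_le₀ (by linarith [Nat.cast_nonneg (α := ℝ) Δ]) (Nat.cast_nonneg m)
  have hbase0 : 0 ≤ 1 - (1 - p) * ρ^k := by
    have h1 : ρ^k ≤ 1 := pow_le_one₀ hρ0 hρ1
    have h2 : (1-p) * ρ^k ≤ 1 * 1 :=
      mul_le_mul (by linarith) h1 (pow_nonneg hρ0 k) one_pos.le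
    linarith
  have hbound0 : 0 ≤ (1 - (1 - p) * ρ^k)^Δ := pow_nonneg hbase0 Δ
  have hCpos : 0 < m.choose Δ := Nat.choose_pos hΔm
  set Cyl : (Fin n → Bool) → (Fin n → Finset (Fin m)) → Set (Fin m → Bool) :=
    fun σ g => {U | ∀ a, (a ∈ g i ∧ ¬ ∃ j, σ j = true ∧ a ∈ g j) → U a = true} with hCyl
  set T : Finset ((Fin n → Bool) × (Fin n → Finset (Fin m))) :=
    (Finset.univ.filter (fun σ : Fin n → Bool => σ i = false)) ×ˢ Finset.univ with hT
  have hdecomp : {ω : GTSpace n m | ω.1 i = false ∧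
        ∀ a ∈ ω.2.1 i, (¬ ∃ j, ω.1 j = true ∧ a ∈ ω.2.1 j) → ω.2.2.1 a = true}
      = ⋃ sg ∈ T, ({sg.1} ×ˢ ({sg.2} ×ˢ (Cyl sg.1 sg.2 ×ˢ (Set.univ : Set (Fin m → Bool))))) := by
    ext ⟨σ, g, U, V⟩
    simp only [Set.mem_setOf_eq]
    constructor
    · rintro ⟨h1, h2⟩
      refine Set.mem_biUnion (show ((σ, g) : (Fin n → Bool) × (Fin n → Finset (Fin m))) ∈ T from ?_) ?_
      · rw [hT]
        exact Finset.mem_product.2 ⟨Finset.mem_filter.2 ⟨Finset.mem_univ _, h1⟩, Finset.mem_univ _⟩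
      · exact ⟨rfl, rfl, fun a ha => h2 a ha.1 ha.2, trivial⟩
    · intro h
      rw [Set.mem_iUnion₂] at h
      obtain ⟨⟨s1, s2⟩, hsgT, hm1, hm2, hm3, -⟩ := h
      rw [Set.mem_singleton_iff] at hm1 hm2
      subst hm1
      subst hm2
      exact ⟨(Finset.mem_filter.1 (Finset.mem_product.1 hsgT).1).2,
        fun a ha hneg => hm3 a ⟨ha, hneg⟩⟩
  have hdisj : (T : Set ((Fin n → Bool) × (Fin n → Finset (Fin m)))).PairwiseDisjoint
      (fun sg => ({sg.1} ×ˢ ({sg.2} ×ˢ (Cyl sg.1 sg.2 ×ˢ (Set.univ : Set (Fin m → Bool)))))) := by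
    intro x hx y hy hxy
    apply Set.disjoint_left.mpr
    rintro ⟨σ, g, U, V⟩ hmem1 hmem2
    apply hxy
    obtain ⟨ha1, hb1, -⟩ := hmem1
    obtain ⟨ha2, hb2, -⟩ := hmem2
    ext
    · rw [← ha1, ← ha2]
    · rw [← hb1, ← hb2]
  rw [hdecomp, measure_biUnion_finset hdisj (fun _ _ => measurableSet_all _)]
  have heval : ∀ sg ∈ T,
      gtMeasure n m Δ k p 0 ({sg.1} ×ˢ ({sg.2} ×ˢ (Cyl sg.1 sg.2 ×ˢ (Set.univ : Set (Fin m → Bool)))))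
      = uniformFinset (sigmaSet n k) {sg.1} * (uniformFinset (designSet n m Δ) {sg.2} *
          (Measure.pi (fun _ : Fin m => bern p)) (Cyl sg.1 sg.2)) := by
    intro sg _
    rw [gtMeasure, Measure.prod_prod, Measure.prod_prod, Measure.prod_prod,
      pi_bern_univ m 0 le_rfl zero_le_one, mul_one]
  rw [Finset.sum_congr rfl heval, hT, Finset.sum_product]
  have hinner : ∀ σ : Fin n → Bool, σ ∈ sigmaSet n k → σ i = false →
      ∑ g : Fin n → Finset (Fin m), uniformFinset (designSet n m Δ) {g} *
        (Measure.pi (fun _ : Fin m => bern p)) (Cyl σ g)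
      ≤ ENNReal.ofReal ((1 - (1-p) * ρ^k)^Δ) := by
    intro σ hσ hσi
    set K := Finset.univ.filter (fun j => σ j = true) with hK
    have hKcard : K.card = k := by
      simpa [sigmaSet] using hσ
    have hiK : i ∉ K := by simp [hK, hσi]
    set X : (Fin n → Finset (Fin m)) → ℝ :=
      fun g => ∏ a ∈ g i, (1 - (1-p) * ∏ j ∈ K, (if a ∈ g j then (0:ℝ) else 1)) with hX
    have hX0 : ∀ g, 0 ≤ X g := by
      intro g
      apply Finset.prod_nonneg
      intro a _
      have hpr0 : 0 ≤ ∏ j ∈ K, (if a ∈ g j then (0:ℝ) else 1) :=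
        Finset.prod_nonneg (fun j _ => by split <;> norm_num)
      have hpr1 : ∏ j ∈ K, (if a ∈ g j then (0:ℝ) else 1) ≤ 1 :=
        Finset.prod_le_one (fun j _ => by split <;> norm_num) (fun j _ => by split <;> norm_num)
      nlinarith
    have hcylval : ∀ g : Fin n → Finset (Fin m),
        (Measure.pi (fun _ : Fin m => bern p)) (Cyl σ g) = ENNReal.ofReal (X g) := by
      intro g
      rw [hCyl]
      rw [pi_bern_cyl m p hp0 hp1 (fun a => a ∈ g i ∧ ¬ ∃ j, σ j = true ∧ a ∈ g j)]
      congr 1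
      rw [show (∏ a : Fin m, if (a ∈ g i ∧ ¬ ∃ j, σ j = true ∧ a ∈ g j) then p else 1)
          = ∏ a ∈ g i, (if (a ∈ g i ∧ ¬ ∃ j, σ j = true ∧ a ∈ g j) then p else 1) from
        (Finset.prod_subset (Finset.subset_univ (g i))
          (fun a _ ha => if_neg (fun h => ha h.1))).symm]
      apply Finset.prod_congr rfl
      intro a ha
      by_cases hex : ∃ j, σ j = true ∧ a ∈ g j
      · rw [if_neg (fun h => h.2 hex)]
        obtain ⟨j, hj1, hj2⟩ := hex
        have hKj : j ∈ K := by
          rw [hK]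
          exact Finset.mem_filter.2 ⟨Finset.mem_univ j, hj1⟩
        have hzero : (∏ j' ∈ K, if a ∈ g j' then (0:ℝ) else 1) = 0 :=
          Finset.prod_eq_zero hKj (if_pos hj2)
        rw [hzero]
        ring
      · rw [if_pos ⟨ha, hex⟩]
        have hone : (∏ j' ∈ K, if a ∈ g j' then (0:ℝ) else 1) = 1 := by
          apply Finset.prod_eq_one
          intro j hj
          have hj1 : σ j = true := by
            rw [hK] at hj
            exact (Finset.mem_filter.1 hj).2
          exact if_neg (fun haj => hex ⟨j, hj1, haj⟩)
        rw [hone]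
        ring
    have hmain := GT9c.main_comb n m Δ hΔm p hp0 hp1 i K hiK
    rw [hKcard] at hmain
    calc ∑ g : Fin n → Finset (Fin m), uniformFinset (designSet n m Δ) {g} *
          (Measure.pi (fun _ : Fin m => bern p)) (Cyl σ g)
        = ((designSet n m Δ).card : ℝ≥0∞)⁻¹ *
            ∑ g : Fin n → Finset (Fin m),
              (if g ∈ designSet n m Δ then ENNReal.ofReal (X g) else 0) := by
          rw [Finset.mul_sum]
          apply Finset.sum_congr rfl
          intro g _
          rw [uniformFinset_apply_singleton, hcylval g]
          by_cases hg : g ∈ designSet n m Δ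
          · rw [if_pos hg, if_pos hg, mul_one]
          · rw [if_neg hg, if_neg hg, mul_zero, zero_mul]
      _ = ((designSet n m Δ).card : ℝ≥0∞)⁻¹ *
            ∑ g ∈ designSet n m Δ, ENNReal.ofReal (X g) := by
          rw [Finset.sum_ite_mem, Finset.univ_inter]
      _ = ((designSet n m Δ).card : ℝ≥0∞)⁻¹ *
            ENNReal.ofReal (∑ g ∈ designSet n m Δ, X g) := by
          rw [ENNReal.ofReal_sum_of_nonneg (fun g _ => hX0 g)]
      _ ≤ ((designSet n m Δ).card : ℝ≥0∞)⁻¹ *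
            ENNReal.ofReal (((m.choose Δ : ℝ))^n * (1 - (1-p) * ρ^k)^Δ) := by
          apply mul_le_mul_right
          apply ENNReal.ofReal_le_ofReal
          rw [designSet_eq_piFinset]
          exact hmain
      _ = ENNReal.ofReal ((1 - (1-p) * ρ^k)^Δ) := by
          rw [ENNReal.ofReal_mul (by positivity), designSet_card,
            show ENNReal.ofReal ((m.choose Δ : ℝ)^n) = (((m.choose Δ)^n : ℕ) : ℝ≥0∞) by
              rw [← Nat.cast_pow, ENNReal.ofReal_natCast],
            ← mul_assoc, ENNReal.inv_mul_cancel (by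
              exact_mod_cast (Nat.pos_of_ne_zero (by positivity)).ne') (ENNReal.natCast_ne_top _),
            one_mul]
  calc ∑ σ ∈ Finset.univ.filter (fun σ : Fin n → Bool => σ i = false),
        ∑ g : Fin n → Finset (Fin m), uniformFinset (sigmaSet n k) {σ} *
          (uniformFinset (designSet n m Δ) {g} *
            (Measure.pi (fun _ : Fin m => bern p)) (Cyl σ g))
      ≤ ∑ σ ∈ Finset.univ.filter (fun σ : Fin n → Bool => σ i = false),
          uniformFinset (sigmaSet n k) {σ} * ENNReal.ofReal ((1 - (1-p) * ρ^k)^Δ) := by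
        apply Finset.sum_le_sum
        intro σ hσmem
        rw [← Finset.mul_sum]
        by_cases hσ : σ ∈ sigmaSet n k
        · exact mul_le_mul_right (hinner σ hσ (Finset.mem_filter.1 hσmem).2) _
        · have hz : uniformFinset (sigmaSet n k) {σ} = 0 := by
            rw [uniformFinset_apply_singleton, if_neg hσ, mul_zero]
          rw [hz, zero_mul, zero_mul]
    _ = (∑ σ ∈ Finset.univ.filter (fun σ : Fin n → Bool => σ i = false),
          uniformFinset (sigmaSet n k) {σ}) * ENNReal.ofReal ((1 - (1-p) * ρ^k)^Δ) := by
        rw [Finset.sum_mul]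
    _ ≤ 1 * ENNReal.ofReal ((1 - (1-p) * ρ^k)^Δ) := by
        apply mul_le_mul_left
        exact le_trans (Finset.sum_le_sum_of_subset (Finset.filter_subset _ _))
          (sum_uniform_singleton_le_one _)
    _ = ENNReal.ofReal ((1 - (1-p) * ρ^k)^Δ) := one_mul _

end BRIDGE



section FAIL
open MeasureTheory

lemma vbad_zero (n m Δ k : ℕ) (p : ℝ) :
    gtMeasure n m Δ k p 0 {ω : GTSpace n m | ∃ a, ω.2.2.2 a = true} = 0 := by
  have hset : {ω : GTSpace n m | ∃ a, ω.2.2.2 a = true}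
      = (Set.univ : Set (Fin n → Bool)) ×ˢ ((Set.univ : Set (Fin n → Finset (Fin m))) ×ˢ
          ((Set.univ : Set (Fin m → Bool)) ×ˢ {V : Fin m → Bool | ∃ a, V a = true})) := by
    ext ⟨σ, g, U, V⟩
    simp [Set.mem_prod]
  rw [hset, gtMeasure, Measure.prod_prod, Measure.prod_prod, Measure.prod_prod]
  have hV : {V : Fin m → Bool | ∃ a, V a = true}
      = ({fun _ => false} : Set (Fin m → Bool))ᶜ := by
    ext V
    simp only [Set.mem_setOf_eq, Set.mem_compl_iff, Set.mem_singleton_iff, funext_iff,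
      not_forall]
    constructor
    · rintro ⟨a, ha⟩
      exact ⟨a, by simp [ha]⟩
    · rintro ⟨a, ha⟩
      exact ⟨a, by simpa using ha⟩
  rw [hV, pi_bern0_compl_false, mul_zero, mul_zero, mul_zero]

lemma comp_fail_bound (n m Δ k : ℕ) (p : ℝ) (hp0 : 0 ≤ p) (hp1 : p ≤ 1)
    (hΔ1 : 1 ≤ Δ) (hΔm : Δ ≤ m) :
    gtMeasure n m Δ k p 0 ((compRecovers (n := n) (m := m) (1/(Δ:ℝ)) Δ)ᶜ)
      ≤ ENNReal.ofReal (n * (1 - (1 - p) * (((m:ℝ) - Δ)/m)^k)^Δ) := by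
  classical
  set Vbad : Set (GTSpace n m) := {ω | ∃ a, ω.2.2.2 a = true} with hVb
  set Bset : Fin n → Set (GTSpace n m) := fun i =>
    {ω | ω.1 i = false ∧ ∀ a ∈ ω.2.1 i, (¬ ∃ j, ω.1 j = true ∧ a ∈ ω.2.1 j) → ω.2.2.1 a = true}
    with hBs
  have hΔ0 : (Δ:ℝ) ≠ 0 := Nat.cast_ne_zero.mpr (by omega)
  have hαΔ : 1/(Δ:ℝ) * Δ = 1 := by field_simp
  have hcover : (compRecovers (n := n) (m := m) (1/(Δ:ℝ)) Δ)ᶜ ⊆ Vbad ∪ ⋃ i, Bset i := by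
    rw [← Set.compl_subset_compl, Set.compl_union, compl_compl]
    rintro ⟨σ, g, U, V⟩ ⟨hV, hB⟩
    have hV' : ∀ a, V a = false := by
      intro a
      by_contra hne
      exact hV ⟨a, by simpa using hne⟩
    rw [Set.mem_compl_iff, Set.mem_iUnion] at hB
    push_neg at hB
    show compOutput (1/(Δ:ℝ)) Δ g (displayed σ g U V) = σ
    funext i
    simp only [compOutput]
    cases hσi : σ i with
    | true =>
      have hempty : (g i).filter (fun a => displayed σ g U V a = false) = ∅ := by
        rw [Finset.filter_eq_empty_iff]
        intro a ha
        rw [displayed, if_pos ⟨i, hσi, ha⟩, hV' a]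
        simp
      have hzero : negCount g (displayed σ g U V) i = 0 := by
        rw [negCount, hempty, Finset.card_empty]
      rw [hαΔ, hzero]
      simp
    | false =>
      have hnb := hB i
      simp only [hBs, Set.mem_setOf_eq, hσi, true_and, not_and, not_forall] at hnb
      obtain ⟨a, ha, hneg, hUa⟩ := hnb
      have hUa' : U a = false := by simpa using hUa
      have hdisp : displayed σ g U V a = false := by
        rw [displayed, if_neg hneg]
        exact hUa'
      have hpos : 0 < negCount g (displayed σ g U V) i :=
        Finset.card_pos.2 ⟨a, Finset.mem_filter.2 ⟨ha, hdisp⟩⟩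
      have h1 : (1:ℝ) ≤ (negCount g (displayed σ g U V) i : ℝ) := by
        exact_mod_cast hpos
      rw [hαΔ]
      simp [h1]
  calc gtMeasure n m Δ k p 0 ((compRecovers (n := n) (m := m) (1/(Δ:ℝ)) Δ)ᶜ)
      ≤ gtMeasure n m Δ k p 0 (Vbad ∪ ⋃ i, Bset i) := measure_mono hcover
    _ ≤ gtMeasure n m Δ k p 0 Vbad + gtMeasure n m Δ k p 0 (⋃ i, Bset i) :=
        measure_union_le _ _
    _ ≤ 0 + ∑ i : Fin n, gtMeasure n m Δ k p 0 (Bset i) := by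
        apply add_le_add
        · rw [hVb, vbad_zero]
        · rw [← tsum_fintype (L := SummationFilter.unconditional _)]
          exact measure_iUnion_le _
    _ ≤ 0 + ∑ _i : Fin n, ENNReal.ofReal ((1 - (1 - p) * (((m:ℝ) - Δ)/m)^k)^Δ) := by
        apply add_le_add le_rfl
        apply Finset.sum_le_sum
        intro i _
        exact Bset_bound n m Δ k p hp0 hp1 hΔm i
    _ = ENNReal.ofReal (n * (1 - (1 - p) * (((m:ℝ) - Δ)/m)^k)^Δ) := by
        rw [zero_add, Finset.sum_const, Finset.card_univ, Fintype.card_fin, nsmul_eq_mul,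
          ← ENNReal.ofReal_natCast n, ← ENNReal.ofReal_mul (Nat.cast_nonneg n)]

end FAIL


noncomputable section

/-- The quantity minimized over `d` for COMP on the reverse Z channel. -/
def bRevZ (p d : ℝ) : ℝ := 1 / (-d * Real.log (1 - Real.exp (-d) * (1 - p)))

/-- Feasible values of the reverse-Z COMP optimization over `d ∈ (0,∞)`. -/
def compSetRevZ (p : ℝ) : Set ℝ := {x | ∃ d : ℝ, 0 < d ∧ x = bRevZ p d}

section ASYMP
open Filter Real

set_option maxHeartbeats 2000000 in
lemma asymp_main (p θ ε d : ℝ)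
    (hp0 : 0 < p) (hp1 : p < 1) (hθ0 : 0 < θ) (hθ1 : θ < 1) (hε : 0 < ε) (hd : 0 < d)
    (k m Δ : ℕ → ℕ)
    (hk : ∀ n, k n = ⌈(n : ℝ) ^ θ⌉₊)
    (hm : ∀ n : ℕ, (1 + ε) * (1 / (1 - θ) * bRevZ p d * (k n * Real.log (n / k n))) ≤ m n)
    (hΔ : ∀ n, Δ n = ⌈d * m n / k n⌉₊) :
    Tendsto (fun n : ℕ => (n:ℝ) * (1 - (1 - p) * (((m n : ℝ) - Δ n)/(m n))^(k n))^(Δ n))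
        atTop (nhds 0)
    ∧ (∀ᶠ n in atTop, 1 ≤ Δ n) ∧ (∀ᶠ n in atTop, Δ n ≤ m n)
    ∧ (∀ᶠ n in atTop, k n ≤ n) := by
  have hθ1' : (0:ℝ) < 1 - θ := by linarith
  have hexpd1 : Real.exp (-d) < 1 := by
    rw [← Real.exp_zero]
    exact Real.exp_lt_exp.mpr (by linarith)
  have hexpd0 : 0 < Real.exp (-d) := Real.exp_pos _
  have hq0 : 0 < (1-p) * Real.exp (-d) := by nlinarith
  have hq1 : (1-p) * Real.exp (-d) < 1 := by nlinarith
  have hrinf0 : 0 < 1 - (1-p) * Real.exp (-d) := by linarith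
  have hrinf1 : 1 - (1-p) * Real.exp (-d) < 1 := by linarith
  set L : ℝ := -Real.log (1 - (1-p) * Real.exp (-d)) with hL
  have hLpos : 0 < L := by
    rw [hL, neg_pos]
    exact Real.log_neg hrinf0 hrinf1
  have hbval : bRevZ p d = 1/(d*L) := by
    rw [bRevZ, hL, show (1 - Real.exp (-d) * (1 - p)) = (1 - (1-p) * Real.exp (-d)) by ring,
      show -d * Real.log (1 - (1-p) * Real.exp (-d))
        = d * -Real.log (1 - (1-p) * Real.exp (-d)) by ring]
  have hbpos : 0 < bRevZ p d := by
    rw [hbval]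
    positivity
  clear_value L
  set c₀ : ℝ := 1/(1-θ) * bRevZ p d with hc₀
  have hc₀pos : 0 < c₀ := mul_pos (by positivity) hbpos
  have hdc₀ : d * c₀ = 1/((1-θ)*L) := by
    rw [hc₀, hbval]
    field_simp
  clear_value c₀
  -- basic eventual facts
  have hev_k1 : ∀ᶠ n : ℕ in atTop, 1 ≤ k n := by
    filter_upwards [eventually_ge_atTop 1] with n hn
    rw [hk n, Nat.one_le_ceil_iff]
    have : (0:ℝ) < n := by exact_mod_cast hn
    positivity
  have hev_kn : ∀ᶠ n : ℕ in atTop, k n ≤ n := by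
    filter_upwards [eventually_ge_atTop 1] with n hn
    rw [hk n, Nat.ceil_le]
    calc (n:ℝ)^θ ≤ (n:ℝ)^(1:ℝ) :=
        Real.rpow_le_rpow_of_exponent_le (by exact_mod_cast hn) hθ1.le
      _ = n := Real.rpow_one n
  have htk : Tendsto (fun n : ℕ => (k n : ℝ)) atTop atTop := by
    apply tendsto_atTop_mono' atTop (Eventually.of_forall (fun n => ?_))
      ((tendsto_rpow_atTop hθ0).comp tendsto_natCast_atTop_atTop)
    rw [hk n]
    exact Nat.le_ceil _
  have hlog_inf : Tendsto (fun n : ℕ => Real.log n) atTop atTop :=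
    tendsto_log_atTop.comp tendsto_natCast_atTop_atTop
  have hev_logpos : ∀ᶠ n : ℕ in atTop, 0 < Real.log n := hlog_inf.eventually_gt_atTop 0
  have hev_logk : ∀ᶠ n : ℕ in atTop,
      θ * Real.log n ≤ Real.log (k n) ∧ Real.log (k n) ≤ θ * Real.log n + Real.log 2 := by
    filter_upwards [eventually_ge_atTop 1] with n hn
    have hn0 : (0:ℝ) < n := by exact_mod_cast hn
    have hrp0 : (0:ℝ) < (n:ℝ)^θ := Real.rpow_pos_of_pos hn0 θ
    have hk1 : 1 ≤ k n := by
      rw [hk n, Nat.one_le_ceil_iff]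
      exact hrp0
    have hk0 : (0:ℝ) < (k n : ℝ) := by exact_mod_cast hk1
    constructor
    · calc θ * Real.log n = Real.log ((n:ℝ)^θ) := (Real.log_rpow hn0 θ).symm
        _ ≤ Real.log (k n) := Real.log_le_log hrp0 (by rw [hk n]; exact Nat.le_ceil _)
    · have hup : (k n : ℝ) ≤ 2 * (n:ℝ)^θ := by
        have h1 : ((⌈(n:ℝ)^θ⌉₊ : ℕ) : ℝ) < (n:ℝ)^θ + 1 := Nat.ceil_lt_add_one hrp0.le
        have hrp1 : (1:ℝ) ≤ (n:ℝ)^θ := by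
          calc (1:ℝ) = (n:ℝ)^(0:ℝ) := (Real.rpow_zero n).symm
            _ ≤ (n:ℝ)^θ := Real.rpow_le_rpow_of_exponent_le (by exact_mod_cast hn) hθ0.le
        rw [hk n]
        linarith
      calc Real.log (k n) ≤ Real.log (2 * (n:ℝ)^θ) := Real.log_le_log hk0 hup
        _ = Real.log 2 + θ * Real.log n := by
            rw [Real.log_mul (by norm_num) (ne_of_gt hrp0), Real.log_rpow hn0]
        _ = θ * Real.log n + Real.log 2 := by ring
  have hlog2_div : Tendsto (fun n : ℕ => Real.log 2 / Real.log n) atTop (nhds 0) :=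
    Tendsto.div_atTop tendsto_const_nhds hlog_inf
  have hlogratio : Tendsto (fun n : ℕ => Real.log ((n:ℝ) / k n) / Real.log n)
      atTop (nhds (1 - θ)) := by
    apply tendsto_of_tendsto_of_tendsto_of_le_of_le'
      (g := fun n : ℕ => 1 - θ - Real.log 2 / Real.log n) (h := fun _ => 1 - θ)
    · have h := hlog2_div.const_sub (1 - θ)
      simpa using h
    · exact tendsto_const_nhds
    · filter_upwards [hev_logpos, hev_logk, hev_k1, eventually_ge_atTop 1] with n h1 h2 h3 h4
      have hn0 : (0:ℝ) < n := by exact_mod_cast h4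
      have hk0 : (0:ℝ) < (k n : ℝ) := by
        have : 1 ≤ k n := h3
        exact_mod_cast this
      rw [Real.log_div (ne_of_gt hn0) (ne_of_gt hk0),
        show (1:ℝ) - θ - Real.log 2 / Real.log n
          = (Real.log n - (θ * Real.log n + Real.log 2))/ Real.log n by field_simp; ring]
      gcongr
      exact h2.2
    · filter_upwards [hev_logpos, hev_logk, hev_k1, eventually_ge_atTop 1] with n h1 h2 h3 h4
      have hn0 : (0:ℝ) < n := by exact_mod_cast h4
      have hk0 : (0:ℝ) < (k n : ℝ) := by
        have : 1 ≤ k n := h3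
        exact_mod_cast this
      rw [Real.log_div (ne_of_gt hn0) (ne_of_gt hk0),
        show (1:ℝ) - θ = (Real.log n - θ * Real.log n)/ Real.log n by field_simp]
      gcongr
      exact h2.1
  have hl_inf : Tendsto (fun n : ℕ => Real.log ((n:ℝ) / k n)) atTop atTop := by
    apply tendsto_atTop_mono' atTop ?_ (Tendsto.const_mul_atTop
      (show (0:ℝ) < (1-θ)/2 by linarith) hlog_inf)
    filter_upwards [hlogratio.eventually (eventually_gt_nhds
      (show (1-θ)/2 < 1 - θ by linarith)), hev_logpos] with n h1 h2
    calc (1-θ)/2 * Real.log n ≤ Real.log ((n:ℝ)/k n) / Real.log n * Real.log n :=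
        mul_le_mul_of_nonneg_right h1.le h2.le
      _ = Real.log ((n:ℝ)/k n) := div_mul_cancel₀ _ (ne_of_gt h2)
  have hev_l0 : ∀ᶠ n : ℕ in atTop, 0 < Real.log ((n:ℝ)/k n) := hl_inf.eventually_gt_atTop 0
  have hev_m1 : ∀ᶠ n : ℕ in atTop, 1 ≤ m n := by
    filter_upwards [hev_k1, hev_l0] with n h1 h2
    have hk0 : (0:ℝ) < (k n : ℝ) := by exact_mod_cast h1
    have hpos : (0:ℝ) < (m n : ℝ) := by
      refine lt_of_lt_of_le ?_ (hm n)
      exact mul_pos (by linarith) (mul_pos hc₀pos (mul_pos hk0 h2))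
    exact_mod_cast Nat.one_le_iff_ne_zero.mpr (by exact_mod_cast hpos.ne')
  have hkm0 : Tendsto (fun n : ℕ => (k n : ℝ)/(m n)) atTop (nhds 0) := by
    apply tendsto_of_tendsto_of_tendsto_of_le_of_le'
      (g := fun _ : ℕ => (0:ℝ)) (h := fun n : ℕ => (((1+ε) * c₀) * Real.log ((n:ℝ)/k n))⁻¹)
      tendsto_const_nhds
    · exact Tendsto.inv_tendsto_atTop (Tendsto.const_mul_atTop
        (mul_pos (by linarith) hc₀pos) hl_inf)
    · filter_upwards [] with n
      positivity
    · filter_upwards [hev_k1, hev_m1, hev_l0] with n h1 h2 h3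
      have hk0 : (0:ℝ) < (k n : ℝ) := by exact_mod_cast h1
      have hm0 : (0:ℝ) < (m n : ℝ) := by exact_mod_cast h2
      have hA0 : (0:ℝ) < ((1+ε) * c₀) * Real.log ((n:ℝ)/k n) := by positivity
      rw [inv_eq_one_div, le_div_iff₀ hA0, div_mul_eq_mul_div, div_le_one hm0]
      calc (k n : ℝ) * (((1+ε) * c₀) * Real.log ((n:ℝ)/k n))
          = (1+ε) * (c₀ * ((k n : ℝ) * Real.log ((n:ℝ)/k n))) := by ring
        _ ≤ m n := hm n
  have hev_kΔm : ∀ᶠ n : ℕ in atTop,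
      d ≤ (k n : ℝ) * ((Δ n : ℝ)/(m n)) ∧ (k n : ℝ) * ((Δ n : ℝ)/(m n)) ≤ d + (k n : ℝ)/(m n) := by
    filter_upwards [hev_k1, hev_m1] with n h1 h2
    have hk0 : (0:ℝ) < (k n : ℝ) := by exact_mod_cast h1
    have hm0 : (0:ℝ) < (m n : ℝ) := by exact_mod_cast h2
    have hlow : d * (m n : ℝ) / (k n : ℝ) ≤ (Δ n : ℝ) := by
      rw [hΔ n]
      exact Nat.le_ceil _
    have hhigh : (Δ n : ℝ) ≤ d * (m n : ℝ) / (k n : ℝ) + 1 := by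
      rw [hΔ n]
      exact (Nat.ceil_lt_add_one (by positivity)).le
    constructor
    · rw [show (k n : ℝ) * ((Δ n : ℝ)/(m n)) = (k n : ℝ) * (Δ n : ℝ) / (m n) by ring,
        le_div_iff₀ hm0]
      rw [div_le_iff₀ hk0] at hlow
      linarith
    · rw [show (k n : ℝ) * ((Δ n : ℝ)/(m n)) = (k n : ℝ) * (Δ n : ℝ) / (m n) by ring,
        div_le_iff₀ hm0]
      have h3 := mul_le_mul_of_nonneg_left hhigh hk0.le
      calc (k n : ℝ) * (Δ n : ℝ) ≤ (k n : ℝ) * (d * (m n : ℝ) / (k n : ℝ) + 1) := h3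
        _ = d * (m n : ℝ) + (k n : ℝ) := by field_simp
        _ = (d + (k n : ℝ)/(m n)) * (m n : ℝ) := by field_simp
  have hkdm : Tendsto (fun n : ℕ => (k n : ℝ) * ((Δ n : ℝ)/(m n))) atTop (nhds d) := by
    apply tendsto_of_tendsto_of_tendsto_of_le_of_le'
      (g := fun _ : ℕ => d) (h := fun n : ℕ => d + (k n : ℝ)/(m n))
      tendsto_const_nhds
    · have h := (tendsto_const_nhds (x := d) (f := (atTop : Filter ℕ))).add hkm0
      simpa using h
    · filter_upwards [hev_kΔm] with n h
      exact h.1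
    · filter_upwards [hev_kΔm] with n h
      exact h.2
  have hδ0 : Tendsto (fun n : ℕ => (Δ n : ℝ)/(m n)) atTop (nhds 0) := by
    have h2 : Tendsto (fun n : ℕ => (k n : ℝ) * ((Δ n : ℝ)/(m n)) * ((k n : ℝ))⁻¹)
        atTop (nhds (d * 0)) := hkdm.mul htk.inv_tendsto_atTop
    rw [mul_zero] at h2
    apply h2.congr'
    filter_upwards [hev_k1] with n h1
    have hk0 : ((k n : ℝ)) ≠ 0 := by
      have : (0:ℝ) < (k n : ℝ) := by exact_mod_cast h1
      exact this.ne'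
    rw [mul_right_comm, mul_inv_cancel₀ hk0, one_mul]
  have hev_Δ1 : ∀ᶠ n : ℕ in atTop, 1 ≤ Δ n := by
    filter_upwards [hev_k1, hev_m1] with n h1 h2
    rw [hΔ n, Nat.one_le_ceil_iff]
    have hk0 : (0:ℝ) < (k n : ℝ) := by exact_mod_cast h1
    have hm0 : (0:ℝ) < (m n : ℝ) := by exact_mod_cast h2
    positivity
  have hev_Δm : ∀ᶠ n : ℕ in atTop, Δ n ≤ m n := by
    filter_upwards [hδ0.eventually (eventually_lt_nhds (show (0:ℝ) < 1/2 by norm_num)),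
      hev_m1] with n h1 h2
    have hm0 : (0:ℝ) < (m n : ℝ) := by exact_mod_cast h2
    rw [div_lt_iff₀ hm0] at h1
    have : (Δ n : ℝ) ≤ (m n : ℝ) := by nlinarith
    exact_mod_cast this
  -- limit of ((m-Δ)/m)^k
  have hev_δhalf : ∀ᶠ n : ℕ in atTop, (Δ n : ℝ)/(m n) ≤ 1/2 :=
    (hδ0.eventually (eventually_lt_nhds (show (0:ℝ) < 1/2 by norm_num))).mono
      fun n h => h.le
  have hlog_lb : ∀ δ : ℝ, 0 ≤ δ → δ ≤ 1/2 → -δ - 2*δ^2 ≤ Real.log (1 - δ) := by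
    intro δ h0 h2
    have hy0 : (0:ℝ) < 1 + (δ + 2*δ^2) := by nlinarith
    have h1δ : (0:ℝ) < 1 - δ := by linarith
    have hexp : Real.exp (-(δ + 2*δ^2)) ≤ 1 - δ := by
      have ha : 1 + (δ + 2*δ^2) ≤ Real.exp (δ + 2*δ^2) := by
        have := Real.add_one_le_exp (δ + 2*δ^2)
        linarith
      have hb : Real.exp (-(δ + 2*δ^2)) = (Real.exp (δ + 2*δ^2))⁻¹ := Real.exp_neg _
      rw [hb]
      have hc : (Real.exp (δ + 2*δ^2))⁻¹ ≤ (1 + (δ + 2*δ^2))⁻¹ :=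
        inv_anti₀ hy0 ha
      refine hc.trans ?_
      rw [inv_eq_one_div, div_le_iff₀ hy0]
      nlinarith
    calc -δ - 2*δ^2 = Real.log (Real.exp (-(δ + 2*δ^2))) := by rw [Real.log_exp]; ring
      _ ≤ Real.log (1 - δ) := Real.log_le_log (Real.exp_pos _) hexp
  have hklog : Tendsto (fun n : ℕ => (k n : ℝ) * Real.log (1 - (Δ n : ℝ)/(m n)))
      atTop (nhds (-d)) := by
    apply tendsto_of_tendsto_of_tendsto_of_le_of_le'
      (g := fun n : ℕ => -((k n : ℝ) * ((Δ n : ℝ)/(m n)))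
        - 2*((k n : ℝ) * ((Δ n : ℝ)/(m n)))*((Δ n : ℝ)/(m n)))
      (h := fun n : ℕ => -((k n : ℝ) * ((Δ n : ℝ)/(m n))))
    · have h := (hkdm.neg).sub (((hkdm.const_mul 2).mul hδ0))
      have he : -d - 2*d*0 = -d := by ring
      rw [he] at h
      exact h.congr (fun n => by ring)
    · exact hkdm.neg
    · filter_upwards [hev_δhalf, hev_k1, hev_m1] with n h1 h2 h3
      have hδnn : 0 ≤ (Δ n : ℝ)/(m n) := by positivity
      have := hlog_lb ((Δ n : ℝ)/(m n)) hδnn h1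
      have hkc : (0:ℝ) ≤ (k n : ℝ) := Nat.cast_nonneg _
      have hmul := mul_le_mul_of_nonneg_left this hkc
      calc -((k n : ℝ) * ((Δ n : ℝ)/(m n)))
            - 2*((k n : ℝ) * ((Δ n : ℝ)/(m n)))*((Δ n : ℝ)/(m n))
          = (k n : ℝ) * (-((Δ n : ℝ)/(m n)) - 2*((Δ n : ℝ)/(m n))^2) := by ring
        _ ≤ (k n : ℝ) * Real.log (1 - (Δ n : ℝ)/(m n)) := hmul
    · filter_upwards [hev_δhalf, hev_k1, hev_m1] with n h1 h2 h3
      have hδnn : 0 ≤ (Δ n : ℝ)/(m n) := by positivity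
      have hlog_ub : Real.log (1 - (Δ n : ℝ)/(m n)) ≤ -((Δ n : ℝ)/(m n)) := by
        have := Real.log_le_sub_one_of_pos (show (0:ℝ) < 1 - (Δ n : ℝ)/(m n) by linarith)
        linarith
      have hkc : (0:ℝ) ≤ (k n : ℝ) := Nat.cast_nonneg _
      have hmul := mul_le_mul_of_nonneg_left hlog_ub hkc
      calc (k n : ℝ) * Real.log (1 - (Δ n : ℝ)/(m n))
          ≤ (k n : ℝ) * -((Δ n : ℝ)/(m n)) := hmul
        _ = -((k n : ℝ) * ((Δ n : ℝ)/(m n))) := by ring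
  have hρk : Tendsto (fun n : ℕ => (((m n : ℝ) - Δ n)/(m n))^(k n)) atTop
      (nhds (Real.exp (-d))) := by
    have hexp : Tendsto (fun n : ℕ => Real.exp ((k n : ℝ) * Real.log (1 - (Δ n : ℝ)/(m n))))
        atTop (nhds (Real.exp (-d))) := (Real.continuous_exp.tendsto _).comp hklog
    apply hexp.congr'
    filter_upwards [hev_δhalf, hev_m1] with n h1 h2
    have hm0 : (0:ℝ) < (m n : ℝ) := by exact_mod_cast h2
    have h1δ : (0:ℝ) < 1 - (Δ n : ℝ)/(m n) := by linarith
    have he : ((m n : ℝ) - Δ n)/(m n) = 1 - (Δ n : ℝ)/(m n) := by field_simp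
    rw [he, ← Real.log_pow, Real.exp_log (pow_pos h1δ (k n))]
  -- the displayed failure bound tends to 0
  set r : ℕ → ℝ := fun n => 1 - (1-p) * (((m n : ℝ) - Δ n)/(m n))^(k n) with hrdef
  have hrlim : Tendsto r atTop (nhds (1 - (1-p) * Real.exp (-d))) := by
    rw [hrdef]
    exact (hρk.const_mul (1-p)).const_sub 1
  clear_value r
  have hev_rpos : ∀ᶠ n : ℕ in atTop, 0 < r n := hrlim.eventually (eventually_gt_nhds hrinf0)
  have hev_rle1 : ∀ᶠ n : ℕ in atTop, r n ≤ 1 := by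
    filter_upwards [hev_Δm, hev_m1] with n h1 h2
    have hm0 : (0:ℝ) < (m n : ℝ) := by exact_mod_cast h2
    have hρ0 : (0:ℝ) ≤ ((m n : ℝ) - Δ n)/(m n) := by
      apply div_nonneg _ hm0.le
      have : (Δ n : ℝ) ≤ (m n : ℝ) := by exact_mod_cast h1
      linarith
    have : 0 ≤ (1-p) * (((m n : ℝ) - Δ n)/(m n))^(k n) :=
      mul_nonneg (by linarith) (pow_nonneg hρ0 _)
    rw [hrdef]
    simp only
    linarith
  have hLn : Tendsto (fun n : ℕ => -Real.log (r n)) atTop (nhds L) := by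
    rw [hL]
    exact ((Real.continuousAt_log hrinf0.ne').tendsto.comp hrlim).neg
  have hev_Ln0 : ∀ᶠ n : ℕ in atTop, 0 ≤ -Real.log (r n) := by
    filter_upwards [hev_rpos, hev_rle1] with n h1 h2
    have := Real.log_nonpos h1.le h2
    linarith
  have hAlim : Tendsto (fun n : ℕ => Real.log ((n:ℝ)/k n)/Real.log n * (-Real.log (r n)))
      atTop (nhds ((1-θ)*L)) := hlogratio.mul hLn
  have hckey : (1+ε/2)*((1-θ)*L)/(1+ε) < (1-θ)*L := by
    have hpos : 0 < (1-θ)*L := mul_pos hθ1' hLpos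
    have hratio : (1+ε/2)/(1+ε) < 1 := by
      rw [div_lt_one (show (0:ℝ) < 1+ε by linarith)]
      linarith
    calc (1+ε/2)*((1-θ)*L)/(1+ε) = ((1+ε/2)/(1+ε)) * ((1-θ)*L) := by ring
      _ < 1 * ((1-θ)*L) := mul_lt_mul_of_pos_right hratio hpos
      _ = (1-θ)*L := one_mul _
  have hev_key : ∀ᶠ n : ℕ in atTop,
      Real.log n + (Δ n : ℝ) * Real.log (r n) ≤ -(ε/2) * Real.log n := by
    filter_upwards [hAlim.eventually (eventually_gt_nhds hckey), hev_logpos, hev_k1,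
      hev_l0, hev_Ln0, hev_m1] with n hA hlogn hk1 hl0 hLn0 hm1
    have hk0 : (0:ℝ) < (k n : ℝ) := by exact_mod_cast hk1
    have hmk : (1+ε)*c₀*(Real.log ((n:ℝ)/k n)) ≤ (m n : ℝ)/(k n) := by
      rw [le_div_iff₀ hk0]
      calc (1+ε)*c₀*(Real.log ((n:ℝ)/k n))*(k n : ℝ)
          = (1+ε)*(c₀*((k n : ℝ)*Real.log ((n:ℝ)/k n))) := by ring
        _ ≤ m n := hm n
    have hΔge : d*((1+ε)*c₀*Real.log ((n:ℝ)/k n)) ≤ (Δ n : ℝ) := by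
      calc d*((1+ε)*c₀*Real.log ((n:ℝ)/k n)) ≤ d * ((m n : ℝ)/(k n)) :=
          mul_le_mul_of_nonneg_left hmk hd.le
        _ = d * (m n : ℝ)/(k n) := by ring
        _ ≤ (Δ n : ℝ) := by rw [hΔ n]; exact Nat.le_ceil _
    have hΔge2 : (1+ε)/((1-θ)*L) * Real.log ((n:ℝ)/k n) ≤ (Δ n : ℝ) := by
      refine le_trans (le_of_eq ?_) hΔge
      rw [show d*((1+ε)*c₀*Real.log ((n:ℝ)/k n)) = (1+ε)*(d*c₀)*Real.log ((n:ℝ)/k n) by ring,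
        hdc₀]
      ring
    have hkey1 : (1+ε)/((1-θ)*L) * (Real.log ((n:ℝ)/k n) * (-Real.log (r n)))
        ≤ (Δ n : ℝ) * (-Real.log (r n)) := by
      rw [show (1+ε)/((1-θ)*L) * (Real.log ((n:ℝ)/k n) * (-Real.log (r n)))
          = ((1+ε)/((1-θ)*L) * Real.log ((n:ℝ)/k n)) * (-Real.log (r n)) by ring]
      exact mul_le_mul_of_nonneg_right hΔge2 hLn0
    have hA' : (1+ε/2)*((1-θ)*L)/(1+ε) * Real.log n
        < Real.log ((n:ℝ)/k n) * (-Real.log (r n)) := by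
      have := mul_lt_mul_of_pos_right hA hlogn
      calc (1+ε/2)*((1-θ)*L)/(1+ε) * Real.log n
          < Real.log ((n:ℝ)/k n)/Real.log n * (-Real.log (r n)) * Real.log n := this
        _ = Real.log ((n:ℝ)/k n) * (-Real.log (r n)) := by
            field_simp
    have hfinal : (1+ε/2) * Real.log n ≤ (Δ n : ℝ) * (-Real.log (r n)) := by
      have hpos2 : (0:ℝ) < (1+ε)/((1-θ)*L) := by positivity
      have step := mul_le_mul_of_nonneg_left hA'.le hpos2.le
      have heq : (1+ε)/((1-θ)*L) * ((1+ε/2)*((1-θ)*L)/(1+ε) * Real.log n)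
          = (1+ε/2) * Real.log n := by
        field_simp
      rw [heq] at step
      exact le_trans step hkey1
    nlinarith [hfinal]
  have hEbot : Tendsto (fun n : ℕ => Real.log n + (Δ n : ℝ) * Real.log (r n)) atTop atBot := by
    apply tendsto_atBot_mono' atTop hev_key
    exact Tendsto.const_mul_atTop_of_neg (show -(ε/2) < 0 by linarith) hlog_inf
  have hb0 : Tendsto (fun n : ℕ => (n:ℝ) * (r n)^(Δ n)) atTop (nhds 0) := by
    have hexp := Real.tendsto_exp_atBot.comp hEbot
    apply hexp.congr'
    filter_upwards [eventually_ge_atTop 1, hev_rpos] with n hn hrp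
    have hn0 : (0:ℝ) < n := by exact_mod_cast hn
    rw [Function.comp_apply, Real.exp_add, Real.exp_log hn0, Real.exp_nat_mul,
      Real.exp_log hrp]
  exact ⟨by simpa only [hrdef] using hb0, hev_Δ1, hev_Δm, hev_kn⟩

end ASYMP

/-- **Noisy COMP for the reverse Z channel** (Corollary 2.9).  With `q = 0`, `0 < p < 1`,
`k = ⌈n^θ⌉`, if `m ≥ (1+ε)·m_{COMP,revZ}` with
`m_{COMP,revZ} = (1/(1-θ))·min_d 1/(-d·log(1-e^{-d}(1-p)))·k·log(n/k)`, and the design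
uses the minimizing `d` (with threshold `α = 1/Δ`), then noisy COMP recovers `σ` w.h.p. -/
theorem noisy_COMP_revZ
    (p θ ε d : ℝ)
    (hp0 : 0 < p) (hp1 : p < 1)
    (hθ0 : 0 < θ) (hθ1 : θ < 1) (hε : 0 < ε)
    (hd : 0 < d)
    (hopt : IsLeast (compSetRevZ p) (bRevZ p d))
    (k m Δ : ℕ → ℕ)
    (hk : ∀ n, k n = ⌈(n : ℝ) ^ θ⌉₊)
    (hm : ∀ n : ℕ,
      (1 + ε) * (1 / (1 - θ) * bRevZ p d * (k n * Real.log (n / k n))) ≤ m n)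
    (hΔ : ∀ n, Δ n = ⌈d * m n / k n⌉₊) :
    Filter.Tendsto
      (fun n => gtMeasure n (m n) (Δ n) (k n) p 0
        (compRecovers (n := n) (m := m n) (1 / (Δ n : ℝ)) (Δ n)))
      Filter.atTop (nhds 1) := by
  obtain ⟨hb0, hev_Δ1, hev_Δm, hev_kn⟩ :=
    asymp_main p θ ε d hp0 hp1 hθ0 hθ1 hε hd k m Δ hk hm hΔ
  have hbnn : ∀ n : ℕ, Δ n ≤ m n →
      0 ≤ (n:ℝ) * (1 - (1 - p) * (((m n : ℝ) - Δ n)/(m n))^(k n))^(Δ n) := by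
    intro n hΔm'
    apply mul_nonneg (Nat.cast_nonneg n)
    apply pow_nonneg
    have hρ0 : (0:ℝ) ≤ ((m n : ℝ) - Δ n)/(m n) := by
      apply div_nonneg _ (Nat.cast_nonneg _)
      have : (Δ n : ℝ) ≤ (m n : ℝ) := by exact_mod_cast hΔm'
      linarith
    have hρ1 : ((m n : ℝ) - Δ n)/(m n) ≤ 1 := by
      rcases Nat.eq_zero_or_pos (m n) with hm0 | hm0
      · have hΔz : Δ n = 0 := by omega
        rw [hm0, hΔz]
        norm_num
      · apply div_le_one_of_le₀ _ (Nat.cast_nonneg _)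
        have : (0:ℝ) ≤ (Δ n : ℝ) := Nat.cast_nonneg _
        linarith
    have h1 : (((m n : ℝ) - Δ n)/(m n))^(k n) ≤ 1 := pow_le_one₀ hρ0 hρ1
    have h2 : (1-p) * (((m n : ℝ) - Δ n)/(m n))^(k n) ≤ 1 * 1 :=
      mul_le_mul (by linarith) h1 (pow_nonneg hρ0 _) one_pos.le
    linarith
  have hofb : Tendsto
      (fun n : ℕ => ENNReal.ofReal ((n:ℝ) * (1 - (1 - p) * (((m n : ℝ) - Δ n)/(m n))^(k n))^(Δ n)))
      atTop (nhds 0) := by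
    have h := ENNReal.tendsto_ofReal hb0
    simpa using h
  apply tendsto_of_tendsto_of_tendsto_of_le_of_le'
    (g := fun n : ℕ => 1 - ENNReal.ofReal
      ((n:ℝ) * (1 - (1 - p) * (((m n : ℝ) - Δ n)/(m n))^(k n))^(Δ n)))
    (h := fun _ : ℕ => (1:ℝ≥0∞))
  · have h1 : Tendsto
        (fun n : ℕ => ENNReal.ofReal
          (1 - (n:ℝ) * (1 - (1 - p) * (((m n : ℝ) - Δ n)/(m n))^(k n))^(Δ n)))
        atTop (nhds 1) := by
      have h := ENNReal.tendsto_ofReal (hb0.const_sub 1)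
      simpa using h
    apply h1.congr'
    filter_upwards [hev_Δm] with n h2
    rw [ENNReal.ofReal_sub 1 (hbnn n h2), ENNReal.ofReal_one]
  · exact tendsto_const_nhds
  · filter_upwards [hev_Δ1, hev_Δm, hev_kn] with n h1 h2 h3
    have huniv : gtMeasure n (m n) (Δ n) (k n) p 0 Set.univ = 1 :=
      gtMeasure_univ _ _ _ _ p 0 h3 h2 hp0.le hp1.le le_rfl zero_le_one
    have hfail := comp_fail_bound n (m n) (Δ n) (k n) p hp0.le hp1.le h1 h2
    rw [tsub_le_iff_right]
    calc (1:ℝ≥0∞) = gtMeasure n (m n) (Δ n) (k n) p 0 Set.univ := huniv.symm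
      _ = gtMeasure n (m n) (Δ n) (k n) p 0
          ((compRecovers (n := n) (m := m n) (1 / (Δ n : ℝ)) (Δ n))
            ∪ (compRecovers (n := n) (m := m n) (1 / (Δ n : ℝ)) (Δ n))ᶜ) := by
          rw [Set.union_compl_self]
      _ ≤ gtMeasure n (m n) (Δ n) (k n) p 0
            (compRecovers (n := n) (m := m n) (1 / (Δ n : ℝ)) (Δ n))
          + gtMeasure n (m n) (Δ n) (k n) p 0
            ((compRecovers (n := n) (m := m n) (1 / (Δ n : ℝ)) (Δ n))ᶜ) :=
          measure_union_le _ _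
      _ ≤ gtMeasure n (m n) (Δ n) (k n) p 0
            (compRecovers (n := n) (m := m n) (1 / (Δ n : ℝ)) (Δ n))
          + ENNReal.ofReal
              ((n:ℝ) * (1 - (1 - p) * (((m n : ℝ) - Δ n)/(m n))^(k n))^(Δ n)) :=
          add_le_add le_rfl hfail
  · filter_upwards [hev_Δm, hev_kn] with n h2 h3
    calc gtMeasure n (m n) (Δ n) (k n) p 0
          (compRecovers (n := n) (m := m n) (1 / (Δ n : ℝ)) (Δ n))
        ≤ gtMeasure n (m n) (Δ n) (k n) p 0 Set.univ :=
          measure_mono (Set.subset_univ _)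
      _ = 1 := gtMeasure_univ _ _ _ _ p 0 h3 h2 hp0.le hp1.le le_rfl zero_le_one

end
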